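/- arXiv:1209.1901 — 5 statements merged into one kernel-verified Lean document; each statement's English description precedes it below -/
import Mathlib

section
/- Let A : [0,∞) × ℝ × ℝ → ℝ be continuous and satisfy: A(r,t,ξ)·ξ ≥ 0 for all r,t,ξ, and A(r,t,ξ) = 0 implies ξ·A(r,t,ξ) = 0 with moreover ξ ≥ 0 whenever A(r,t,ξ) ≥ 0 (sign condition: A(r,t,ξ) and ξ have the same sign). Suppose u ∈ C¹([0,∞)) satisfies (r^{N-1} A(r,u(r),u'(r)))' ≥ 0 for r > 0 with flux vanishing at 0, u ≥ 0, and inf_{r ≥ r₀} u(r) = 0 for every r₀ > 0. Then u ≡ 0. -/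
open Filter Set

theorem stmt3 (N : ℕ) (A : ℝ → ℝ → ℝ → ℝ)
    (hAcont : Continuous fun p : ℝ × ℝ × ℝ => A p.1 p.2.1 p.2.2)
    (hWE : ∀ r t ξ : ℝ, 0 ≤ A r t ξ * ξ)
    (hsign : ∀ r t ξ : ℝ, 0 ≤ A r t ξ → 0 ≤ ξ)
    (u : ℝ → ℝ) (hu : ContDiff ℝ 1 u)
    (hFdiff : ∀ r > (0:ℝ),
      DifferentiableAt ℝ (fun r : ℝ => r ^ (N - 1) * A r (u r) (deriv u r)) r)
    (hmono : ∀ r > (0:ℝ),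
      0 ≤ deriv (fun r : ℝ => r ^ (N - 1) * A r (u r) (deriv u r)) r)
    (h0 : Tendsto (fun r : ℝ => r ^ (N - 1) * A r (u r) (deriv u r))
      (nhdsWithin 0 (Set.Ioi 0)) (nhds 0))
    (hupos : ∀ r : ℝ, 0 ≤ r → 0 ≤ u r)
    (hinf : ∀ r₀ > (0:ℝ), sInf (u '' Set.Ici r₀) = 0) :
    ∀ r : ℝ, 0 ≤ r → u r = 0 := by
  set F : ℝ → ℝ := fun r : ℝ => r ^ (N - 1) * A r (u r) (deriv u r) with hF
  -- F is monotone on Ioi 0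
  have hFcont : ContinuousOn F (Ioi 0) := fun x hx =>
    (hFdiff x hx).continuousAt.continuousWithinAt
  have hFmono : MonotoneOn F (Ioi 0) := by
    apply monotoneOn_of_deriv_nonneg (convex_Ioi 0) hFcont
    · intro x hx
      rw [interior_Ioi] at hx
      exact (hFdiff x hx).differentiableWithinAt
    · intro x hx
      rw [interior_Ioi] at hx
      exact hmono x hx
  -- F ≥ 0 on Ioi 0
  have hFnn : ∀ r > (0:ℝ), 0 ≤ F r := by
    intro r hr
    refine le_of_tendsto h0 ?_
    have hmem : Ioo (0:ℝ) r ∈ nhdsWithin (0:ℝ) (Ioi 0) := by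
      rw [show Ioo (0:ℝ) r = Ioi 0 ∩ Iio r from (Ioi_inter_Iio).symm]
      exact inter_mem_nhdsWithin _ (Iio_mem_nhds hr)
    filter_upwards [hmem] with s hs
    exact hFmono hs.1 (mem_Ioi.mpr hr) hs.2.le
  -- deriv u ≥ 0 on Ioi 0
  have hderiv : ∀ r > (0:ℝ), 0 ≤ deriv u r := by
    intro r hr
    apply hsign r (u r)
    have hpow : 0 < r ^ (N - 1) := pow_pos hr _
    have h1 := hFnn r hr
    simp only [hF] at h1
    by_contra h2
    push_neg at h2
    nlinarith
  -- u monotone on Ici 0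
  have humono : MonotoneOn u (Ici 0) := by
    apply monotoneOn_of_deriv_nonneg (convex_Ici 0) hu.continuous.continuousOn
    · intro x hx
      exact (hu.differentiable one_ne_zero x).differentiableWithinAt
    · intro x hx
      rw [interior_Ici] at hx
      exact hderiv x hx
  -- u = 0 on Ioi 0
  have hzero : ∀ r > (0:ℝ), u r = 0 := by
    intro r hr
    have h1 : u r ≤ sInf (u '' Ici r) := by
      apply le_csInf ⟨u r, mem_image_of_mem u self_mem_Ici⟩
      rintro y ⟨x, hx, rfl⟩
      exact humono (mem_Ici.mpr hr.le) (mem_Ici.mpr (hr.le.trans hx)) hx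
    rw [hinf r hr] at h1
    exact le_antisymm h1 (hupos r hr.le)
  intro r hr
  rcases eq_or_lt_of_le hr with h | h
  · have h1 : u 0 ≤ u 1 := humono self_mem_Ici (mem_Ici.mpr zero_le_one) zero_le_one
    rw [hzero 1 one_pos] at h1
    rw [← h]
    exact le_antisymm h1 (hupos 0 le_rfl)
  · exact hzero r h
end

section
/- The map ξ ↦ ξ/√(1+|ξ|²) from ℝ^N to ℝ^N is W-p-C for every p with 1 ≤ p ≤ 2: it satisfies A(ξ)·ξ ≥ 0, A(0) = 0, and there exists k > 0 such that (A(ξ)·ξ)^{p-1} ≥ k^{p-1}|A(ξ)|^p for all ξ ∈ ℝ^N. -/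
open Real

theorem stmt5 (N : ℕ) (p : ℝ) (hp1 : 1 ≤ p) (hp2 : p ≤ 2) :
    (∀ ξ : EuclideanSpace ℝ (Fin N),
        0 ≤ (inner ℝ ((Real.sqrt (1 + ‖ξ‖ ^ 2))⁻¹ • ξ) ξ : ℝ)) ∧
    ((Real.sqrt (1 + ‖(0 : EuclideanSpace ℝ (Fin N))‖ ^ 2))⁻¹ •
        (0 : EuclideanSpace ℝ (Fin N)) = 0) ∧
    (∃ k > (0:ℝ), ∀ ξ : EuclideanSpace ℝ (Fin N),
        k ^ (p - 1) * ‖(Real.sqrt (1 + ‖ξ‖ ^ 2))⁻¹ • ξ‖ ^ p ≤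
          (inner ℝ ((Real.sqrt (1 + ‖ξ‖ ^ 2))⁻¹ • ξ) ξ : ℝ) ^ (p - 1)) := by
  have key : ∀ ξ : EuclideanSpace ℝ (Fin N),
      (inner ℝ ((Real.sqrt (1 + ‖ξ‖ ^ 2))⁻¹ • ξ) ξ : ℝ)
        = (Real.sqrt (1 + ‖ξ‖ ^ 2))⁻¹ * ‖ξ‖ ^ 2 := by
    intro ξ
    rw [real_inner_smul_left, real_inner_self_eq_norm_sq]
  refine ⟨?_, by simp, 1, one_pos, ?_⟩
  · intro ξ
    rw [key]
    positivity
  · intro ξ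
    set t := ‖ξ‖ with ht
    have ht0 : 0 ≤ t := norm_nonneg _
    have hs1 : (1:ℝ) ≤ Real.sqrt (1 + t ^ 2) := by
      nlinarith [Real.sq_sqrt (show (0:ℝ) ≤ 1 + t ^ 2 by positivity),
        Real.sqrt_nonneg (1 + t ^ 2)]
    set s := Real.sqrt (1 + t ^ 2) with hsdef
    have hs0 : 0 < s := lt_of_lt_of_le one_pos hs1
    have hts : t ≤ s := by
      have : t = Real.sqrt (t ^ 2) := by
        rw [Real.sqrt_sq ht0]
      rw [this]
      exact Real.sqrt_le_sqrt (by nlinarith)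
    have hnorm : ‖s⁻¹ • ξ‖ = t / s := by
      rw [norm_smul, Real.norm_eq_abs, abs_of_nonneg (by positivity)]
      rw [division_def, mul_comm]
    rw [key, hnorm, one_rpow, one_mul, ← ht]
    rcases eq_or_lt_of_le ht0 with h0 | htpos
    · rw [← h0]
      simp only [zero_div]
      rw [Real.zero_rpow (by linarith : p ≠ 0)]
      positivity
    · -- t > 0
      have hstp : Real.rpow t (2 - p) ≤ s := by
        rcases le_total t 1 with h1 | h1
        · calc t ^ (2 - p) ≤ 1 := Real.rpow_le_one ht0 h1 (by linarith)
            _ ≤ s := hs1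
        · calc t ^ (2 - p) ≤ t ^ (1:ℝ) :=
              Real.rpow_le_rpow_of_exponent_le h1 (by linarith)
            _ = t := Real.rpow_one t
            _ ≤ s := hts
      have hkey : t / s ≤ t ^ (p - 1) := by
        rw [div_le_iff₀ hs0]
        calc t = t ^ (p - 1) * t ^ (2 - p) := by
              rw [← Real.rpow_add htpos]
              norm_num
          _ ≤ t ^ (p - 1) * s := by
              exact mul_le_mul_of_nonneg_left hstp (by positivity)
      have hineq : s⁻¹ * t ^ 2 = (t / s) * t := by
        field_simp
      rw [hineq]
      have hmul : ((t / s) * t) ^ (p - 1) = (t / s) ^ (p - 1) * t ^ (p - 1) :=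
        Real.mul_rpow (by positivity) ht0
      rw [hmul]
      have hsplit : (t / s) ^ p = (t / s) ^ (p - 1) * (t / s) := by
        rw [show (t / s) ^ (p - 1) * (t / s)
            = (t / s) ^ (p - 1) * (t / s) ^ (1:ℝ) by rw [Real.rpow_one],
          ← Real.rpow_add (by positivity)]
        norm_num
      rw [hsplit]
      exact mul_le_mul_of_nonneg_left hkey (by positivity)
end

section
/- Let m > 1 and p satisfy m ≥ p ≥ m/2 and p ≥ 1. Then the map A(ξ) := |ξ|^{m-2} ξ / √(1+|ξ|^m) on ℝ^N is W-p-C: A(ξ)·ξ ≥ 0, A(0) = 0, and there is a constant k > 0 with (A(ξ)·ξ)^{p-1} ≥ k^{p-1}|A(ξ)|^p for all ξ. -/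
lemma key_ineq (m p t : ℝ) (hm : 1 < m) (hp1 : 1 ≤ p)
    (hpm : p ≤ m) (hmp : m / 2 ≤ p) (ht : 0 < t) :
    (t ^ (m - 2) / Real.sqrt (1 + t ^ m) * t) ^ p ≤
      (t ^ (m - 2) / Real.sqrt (1 + t ^ m) * t ^ (2:ℕ)) ^ (p - 1) := by
  have htm : (0:ℝ) < t ^ m := Real.rpow_pos_of_pos ht m
  have hs : 0 < Real.sqrt (1 + t ^ m) := Real.sqrt_pos.2 (by linarith)
  set s := Real.sqrt (1 + t ^ m) with hsdef
  have hssq : s ^ (2:ℕ) = 1 + t ^ m := Real.sq_sqrt (by linarith)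
  have hts : t ^ (m - p) ≤ s := by
    have h2 : (t ^ (m - p)) ^ (2:ℕ) ≤ 1 + t ^ m := by
      have he : (t ^ (m - p)) ^ (2:ℕ) = t ^ ((m - p) * 2) := by
        rw [← Real.rpow_natCast (t ^ (m - p)) 2, ← Real.rpow_mul ht.le]
        norm_num
      rw [he]
      rcases le_total t 1 with h1 | h1
      · have : t ^ ((m - p) * 2) ≤ 1 := Real.rpow_le_one ht.le h1 (by nlinarith)
        linarith
      · have : t ^ ((m - p) * 2) ≤ t ^ m :=
          Real.rpow_le_rpow_of_exponent_le h1 (by nlinarith)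
        linarith
    nlinarith [Real.rpow_nonneg ht.le (m - p), hs]
  have hA : t ^ (m - 2) * t = t ^ (m - 1) := by
    have h := Real.rpow_add ht (m - 2) 1
    rw [Real.rpow_one] at h
    rw [← h]; congr 1; ring
  have hB : t ^ (m - 2) * t ^ (2:ℕ) = t ^ m := by
    have h := Real.rpow_add ht (m - 2) 2
    rw [← Real.rpow_natCast t 2]
    push_cast
    rw [← h]; congr 1; ring
  rw [div_mul_eq_mul_div, div_mul_eq_mul_div, hA, hB]
  rw [Real.div_rpow (Real.rpow_nonneg ht.le _) hs.le,
      Real.div_rpow (Real.rpow_nonneg ht.le _) hs.le,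
      ← Real.rpow_mul ht.le, ← Real.rpow_mul ht.le,
      div_le_div_iff₀ (Real.rpow_pos_of_pos hs _) (Real.rpow_pos_of_pos hs _)]
  have e1 : (m - 1) * p = m * (p - 1) + (m - p) := by ring
  rw [e1, Real.rpow_add ht]
  have e2 : s ^ p = s ^ (p - 1) * s := by
    have h := Real.rpow_add hs (p - 1) 1
    rw [Real.rpow_one] at h
    rw [← h]; congr 1; ring
  rw [e2]
  have h3 : t ^ (m * (p - 1)) * s ^ (p - 1) * t ^ (m - p) ≤
      t ^ (m * (p - 1)) * s ^ (p - 1) * s :=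
    mul_le_mul_of_nonneg_left hts (by positivity)
  nlinarith [h3]

theorem stmt7 (N : ℕ) (m p : ℝ) (hm : 1 < m) (hp1 : 1 ≤ p)
    (hpm : p ≤ m) (hmp : m / 2 ≤ p) :
    (∀ ξ : EuclideanSpace ℝ (Fin N),
        0 ≤ (inner ℝ ((‖ξ‖ ^ (m - 2) / Real.sqrt (1 + ‖ξ‖ ^ m)) • ξ) ξ : ℝ)) ∧
    ((‖(0 : EuclideanSpace ℝ (Fin N))‖ ^ (m - 2) /
        Real.sqrt (1 + ‖(0 : EuclideanSpace ℝ (Fin N))‖ ^ m)) •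
        (0 : EuclideanSpace ℝ (Fin N)) = 0) ∧
    (∃ k > (0:ℝ), ∀ ξ : EuclideanSpace ℝ (Fin N),
        k ^ (p - 1) * ‖(‖ξ‖ ^ (m - 2) / Real.sqrt (1 + ‖ξ‖ ^ m)) • ξ‖ ^ p ≤
          (inner ℝ ((‖ξ‖ ^ (m - 2) / Real.sqrt (1 + ‖ξ‖ ^ m)) • ξ) ξ : ℝ) ^ (p - 1)) := by
  refine ⟨?_, smul_zero _, 1, one_pos, ?_⟩
  · intro ξ
    rw [real_inner_smul_left, real_inner_self_eq_norm_sq]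
    positivity
  · intro ξ
    rw [Real.one_rpow, one_mul, real_inner_smul_left, real_inner_self_eq_norm_sq,
      norm_smul, Real.norm_eq_abs,
      abs_of_nonneg (by positivity : (0:ℝ) ≤ ‖ξ‖ ^ (m - 2) / Real.sqrt (1 + ‖ξ‖ ^ m))]
    rcases eq_or_lt_of_le (norm_nonneg ξ) with h0 | h0
    · rw [← h0, mul_zero, Real.zero_rpow (by linarith)]
      positivity
    · exact key_ineq m p ‖ξ‖ hm hp1 hpm hmp h0
end

section
/- For 1 < p ≤ 2 there exists a constant k > 0 such that for all ξ, η ∈ ℝ^N, ((A(ξ) − A(η))·(ξ − η))^{p-1} ≥ k^{p-1} |A(ξ) − A(η)|^p, where A(ξ) = ξ/√(1+|ξ|²). -/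
open Real

lemma alg (X Y a b c : ℝ) (hX : 0 ≤ X) (hY : 0 ≤ Y)
    (ha0 : 0 < a) (ha1 : a ≤ 1) (hb0 : 0 < b) (hb1 : b ≤ 1)
    (haX : a ^ 2 * (1 + X ^ 2) = 1) (hbY : b ^ 2 * (1 + Y ^ 2) = 1)
    (hc : c ≤ X * Y) :
    a ^ 2 * X ^ 2 + b ^ 2 * Y ^ 2 - 2 * a * b * c ≤
      a * X ^ 2 + b * Y ^ 2 - (a + b) * c := by
  have hfac : 0 ≤ (a * X - b * Y) * ((1 - a) * X - (1 - b) * Y) := by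
    rcases le_total X Y with h | h
    · have hab2 : b ^ 2 ≤ a ^ 2 := by
        nlinarith [mul_nonneg (sq_nonneg b) (by nlinarith : (0:ℝ) ≤ Y ^ 2 - X ^ 2)]
      have hab : b ≤ a := by nlinarith [mul_pos ha0 hb0]
      have h1 : a * X ≤ b * Y := by
        have hsq : (a * X) ^ 2 ≤ (b * Y) ^ 2 := by nlinarith
        nlinarith [mul_nonneg ha0.le hX, mul_nonneg hb0.le hY]
      have h2 : (1 - a) * X ≤ (1 - b) * Y :=
        mul_le_mul (by linarith) h hX (by linarith)
      nlinarith [mul_nonneg (by linarith : (0:ℝ) ≤ b * Y - a * X)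
        (by linarith : (0:ℝ) ≤ (1 - b) * Y - (1 - a) * X)]
    · have hab2 : a ^ 2 ≤ b ^ 2 := by
        nlinarith [mul_nonneg (sq_nonneg a) (by nlinarith : (0:ℝ) ≤ X ^ 2 - Y ^ 2)]
      have hab : a ≤ b := by nlinarith [mul_pos ha0 hb0]
      have h1 : b * Y ≤ a * X := by
        have hsq : (b * Y) ^ 2 ≤ (a * X) ^ 2 := by nlinarith
        nlinarith [mul_nonneg ha0.le hX, mul_nonneg hb0.le hY]
      have h2 : (1 - b) * Y ≤ (1 - a) * X :=
        mul_le_mul (by linarith) h hY (by linarith)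
      exact mul_nonneg (by linarith) (by linarith)
  have hcoef : 0 ≤ a + b - 2 * a * b := by nlinarith
  nlinarith [mul_nonneg hcoef (by linarith : (0:ℝ) ≤ X * Y - c)]

lemma core {N : ℕ} (ξ η : EuclideanSpace ℝ (Fin N)) :
    ‖(Real.sqrt (1 + ‖ξ‖ ^ 2))⁻¹ • ξ - (Real.sqrt (1 + ‖η‖ ^ 2))⁻¹ • η‖ ^ 2 ≤
      (inner ℝ ((Real.sqrt (1 + ‖ξ‖ ^ 2))⁻¹ • ξ - (Real.sqrt (1 + ‖η‖ ^ 2))⁻¹ • η)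
        (ξ - η) : ℝ) := by
  set X := ‖ξ‖ with hXdef
  set Y := ‖η‖ with hYdef
  have h1X : (0:ℝ) < 1 + X ^ 2 := by positivity
  have h1Y : (0:ℝ) < 1 + Y ^ 2 := by positivity
  have hsX : Real.sqrt (1 + X ^ 2) ^ 2 = 1 + X ^ 2 := Real.sq_sqrt h1X.le
  have hsY : Real.sqrt (1 + Y ^ 2) ^ 2 = 1 + Y ^ 2 := Real.sq_sqrt h1Y.le
  have hpX : 0 < Real.sqrt (1 + X ^ 2) := Real.sqrt_pos.mpr h1X
  have hpY : 0 < Real.sqrt (1 + Y ^ 2) := Real.sqrt_pos.mpr h1Y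
  set a := (Real.sqrt (1 + X ^ 2))⁻¹ with hadef
  set b := (Real.sqrt (1 + Y ^ 2))⁻¹ with hbdef
  have ha0 : 0 < a := inv_pos.mpr hpX
  have hb0 : 0 < b := inv_pos.mpr hpY
  have h1sX : (1:ℝ) ≤ Real.sqrt (1 + X ^ 2) := by
    have := Real.sqrt_le_sqrt (show (1:ℝ) ≤ 1 + X ^ 2 by nlinarith [sq_nonneg X])
    rwa [Real.sqrt_one] at this
  have h1sY : (1:ℝ) ≤ Real.sqrt (1 + Y ^ 2) := by
    have := Real.sqrt_le_sqrt (show (1:ℝ) ≤ 1 + Y ^ 2 by nlinarith [sq_nonneg Y])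
    rwa [Real.sqrt_one] at this
  have ha1 : a ≤ 1 := inv_le_one_of_one_le₀ h1sX
  have hb1 : b ≤ 1 := inv_le_one_of_one_le₀ h1sY
  have haX : a ^ 2 * (1 + X ^ 2) = 1 := by
    rw [hadef, ← hsX]; field_simp; rw [Real.sqrt_sq hpX.le]
  have hbY : b ^ 2 * (1 + Y ^ 2) = 1 := by
    rw [hbdef, ← hsY]; field_simp; rw [Real.sqrt_sq hpY.le]
  have hc : (inner ℝ ξ η : ℝ) ≤ X * Y := real_inner_le_norm ξ η
  have expand1 : (inner ℝ (a • ξ - b • η) (ξ - η) : ℝ) =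
      a * X ^ 2 + b * Y ^ 2 - (a + b) * (inner ℝ ξ η : ℝ) := by
    simp only [inner_sub_left, inner_sub_right, real_inner_smul_left,
      real_inner_self_eq_norm_sq, real_inner_comm η ξ]
    ring
  have expand2 : ‖a • ξ - b • η‖ ^ 2 =
      a ^ 2 * X ^ 2 + b ^ 2 * Y ^ 2 - 2 * a * b * (inner ℝ ξ η : ℝ) := by
    rw [← real_inner_self_eq_norm_sq]
    simp only [inner_sub_left, inner_sub_right, real_inner_smul_left, real_inner_smul_right,
      real_inner_self_eq_norm_sq, real_inner_comm η ξ, norm_smul, Real.norm_eq_abs,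
      abs_of_pos ha0, abs_of_pos hb0, mul_pow]
    ring
  rw [expand1, expand2]
  exact alg X Y a b _ (norm_nonneg _) (norm_nonneg _) ha0 ha1 hb0 hb1 haX hbY hc

lemma Abound {N : ℕ} (ξ : EuclideanSpace ℝ (Fin N)) :
    ‖(Real.sqrt (1 + ‖ξ‖ ^ 2))⁻¹ • ξ‖ ≤ 1 := by
  have h1X : (0:ℝ) < 1 + ‖ξ‖ ^ 2 := by positivity
  have hpX : 0 < Real.sqrt (1 + ‖ξ‖ ^ 2) := Real.sqrt_pos.mpr h1X
  rw [norm_smul, Real.norm_eq_abs, abs_of_pos (inv_pos.mpr hpX)]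
  rw [inv_mul_le_iff₀ hpX, mul_one]
  calc ‖ξ‖ = Real.sqrt (‖ξ‖ ^ 2) := (Real.sqrt_sq (norm_nonneg _)).symm
    _ ≤ Real.sqrt (1 + ‖ξ‖ ^ 2) := Real.sqrt_le_sqrt (by linarith)

theorem stmt11 (N : ℕ) (p : ℝ) (hp1 : 1 < p) (hp2 : p ≤ 2) :
    ∃ k > (0:ℝ), ∀ ξ η : EuclideanSpace ℝ (Fin N),
      k ^ (p - 1) *
          ‖(Real.sqrt (1 + ‖ξ‖ ^ 2))⁻¹ • ξ - (Real.sqrt (1 + ‖η‖ ^ 2))⁻¹ • η‖ ^ p ≤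
        (inner ℝ ((Real.sqrt (1 + ‖ξ‖ ^ 2))⁻¹ • ξ - (Real.sqrt (1 + ‖η‖ ^ 2))⁻¹ • η)
          (ξ - η) : ℝ) ^ (p - 1) := by
  have hp0 : 0 < p - 1 := by linarith
  refine ⟨(2:ℝ) ^ ((p - 2) / (p - 1)), Real.rpow_pos_of_pos two_pos _, fun ξ η => ?_⟩
  have hkp : (((2:ℝ) ^ ((p - 2) / (p - 1))) ^ (p - 1)) = (2:ℝ) ^ (p - 2) := by
    rw [← Real.rpow_mul (by norm_num), div_mul_cancel₀ _ hp0.ne']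
  rw [hkp]
  set D := (Real.sqrt (1 + ‖ξ‖ ^ 2))⁻¹ • ξ - (Real.sqrt (1 + ‖η‖ ^ 2))⁻¹ • η with hD
  set I := (inner ℝ D (ξ - η) : ℝ) with hI
  have hcore : ‖D‖ ^ 2 ≤ I := core ξ η
  have htn : (0:ℝ) ≤ ‖D‖ := norm_nonneg _
  have hI0 : 0 ≤ I := le_trans (by positivity) hcore
  have ht2 : ‖D‖ ≤ 2 := by
    calc ‖D‖ ≤ ‖(Real.sqrt (1 + ‖ξ‖ ^ 2))⁻¹ • ξ‖ + ‖(Real.sqrt (1 + ‖η‖ ^ 2))⁻¹ • η‖ :=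
          norm_sub_le _ _
      _ ≤ 1 + 1 := add_le_add (Abound ξ) (Abound η)
      _ = 2 := by norm_num
  rcases eq_or_lt_of_le htn with h0 | h0
  · rw [← h0, Real.zero_rpow (by linarith : p ≠ 0), mul_zero]
    exact Real.rpow_nonneg hI0 _
  · have h1 : ‖D‖ ^ (2 * (p - 1)) ≤ I ^ (p - 1) := by
      rw [Real.rpow_mul htn]
      apply Real.rpow_le_rpow (by positivity) _ hp0.le
      rw [show ((2:ℝ) : ℝ) = ((2:ℕ) : ℝ) by norm_num, Real.rpow_natCast]
      exact hcore
    calc (2:ℝ) ^ (p - 2) * ‖D‖ ^ p ≤ ‖D‖ ^ (p - 2) * ‖D‖ ^ p := by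
          apply mul_le_mul_of_nonneg_right _ (Real.rpow_nonneg htn p)
          exact Real.rpow_le_rpow_of_nonpos h0 ht2 (by linarith)
      _ = ‖D‖ ^ (2 * (p - 1)) := by rw [← Real.rpow_add h0]; ring_nf
      _ ≤ I ^ (p - 1) := h1
end

section
/- Let N ≥ 1, α > 0, and on the half-space Ω = {x ∈ ℝ^N : x₁ > 0} define u(x) = x₁^{−a} and v(x) = x₁^{−b}, where a = (p₂q₂+p₁(p₂−1))/(q₁q₂−(p₁−1)(p₂−1)) and b = (p₁q₁+p₂(p₁−1))/(q₁q₂−(p₁−1)(p₂−1)), with p₁, p₂ > 1, q₁ > p₁−1, q₂ > p₂−1. Then there exist constants λ, μ > 0 such that Δ_{p₁} u = λ v^{q₂} and Δ_{p₂} v = μ u^{q₁} pointwise on Ω. -/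
open Real Filter

variable {N : ℕ}

lemma hasFDerivAt_rpow_proj (i : Fin N) (r : ℝ) (x : EuclideanSpace ℝ (Fin N)) (hx : 0 < x i) :
    HasFDerivAt (fun z : EuclideanSpace ℝ (Fin N) => z i ^ r)
      ((r * x i ^ (r - 1)) • (EuclideanSpace.proj i : EuclideanSpace ℝ (Fin N) →L[ℝ] ℝ)) x := by
  have h := (Real.hasDerivAt_rpow_const (x := x i) (p := r) (Or.inl hx.ne')).hasFDerivAt
  have h2 := h.comp x (EuclideanSpace.proj (𝕜 := ℝ) i).hasFDerivAt
  refine h2.congr_fderiv ?_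
  ext v
  simp [mul_comm]

lemma gradient_rpow (i : Fin N) (r : ℝ) (x : EuclideanSpace ℝ (Fin N)) (hx : 0 < x i) :
    gradient (fun z : EuclideanSpace ℝ (Fin N) => z i ^ r) x
      = (r * x i ^ (r - 1)) • EuclideanSpace.single i 1 := by
  apply HasGradientAt.gradient
  rw [hasGradientAt_iff_hasFDerivAt]
  refine (hasFDerivAt_rpow_proj i r x hx).congr_fderiv ?_
  ext v
  simp [InnerProductSpace.toDual_apply_apply, real_inner_smul_left, real_inner_comm,
    EuclideanSpace.inner_single_left]

lemma key_sum (i : Fin N) (p a : ℝ) (hp : 1 < p) (ha : 0 < a)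
    (x : EuclideanSpace ℝ (Fin N)) (hx : 0 < x i) :
    (∑ j : Fin N,
      (fderiv ℝ (fun y : EuclideanSpace ℝ (Fin N) =>
          (‖gradient (fun z : EuclideanSpace ℝ (Fin N) => z i ^ (-a)) y‖ ^ (p - 2)) •
            gradient (fun z : EuclideanSpace ℝ (Fin N) => z i ^ (-a)) y)
        x (EuclideanSpace.single j 1)) j)
      = a ^ (p - 1) * ((a + 1) * (p - 1)) * x i ^ ((-a - 1) * (p - 1) - 1) := by
  set c : ℝ := (-a - 1) * (p - 1) with hc
  set G : EuclideanSpace ℝ (Fin N) → EuclideanSpace ℝ (Fin N) :=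
    fun y => (-(a ^ (p - 1)) * y i ^ c) • EuclideanSpace.single i 1 with hG
  have hs : IsOpen {y : EuclideanSpace ℝ (Fin N) | 0 < y i} :=
    isOpen_lt continuous_const (EuclideanSpace.proj (𝕜 := ℝ) i).continuous
  have hev : (fun y : EuclideanSpace ℝ (Fin N) =>
      (‖gradient (fun z : EuclideanSpace ℝ (Fin N) => z i ^ (-a)) y‖ ^ (p - 2)) •
        gradient (fun z : EuclideanSpace ℝ (Fin N) => z i ^ (-a)) y) =ᶠ[nhds x] G := by
    filter_upwards [hs.mem_nhds hx] with y hy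
    have hgr := gradient_rpow i (-a) y hy
    have hrw : -a - 1 = -a - 1 := rfl
    rw [hgr]
    have ht : (0:ℝ) < y i ^ (-a - 1) := Real.rpow_pos_of_pos hy _
    have hnorm : ‖(-a * y i ^ (-a - 1)) • EuclideanSpace.single i (1:ℝ)‖
        = a * y i ^ (-a - 1) := by
      rw [norm_smul, EuclideanSpace.norm_single, norm_one, mul_one, Real.norm_eq_abs,
        abs_mul, abs_neg, abs_of_pos ha, abs_of_pos ht]
    rw [hnorm, smul_smul, hG]
    congr 1
    rw [Real.mul_rpow ha.le ht.le]
    have h1 : (y i ^ (-a - 1)) ^ (p - 2) * (-a * y i ^ (-a - 1))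
        = -a * (y i ^ (-a - 1)) ^ (p - 2 + 1) := by
      rw [Real.rpow_add_one ht.ne']; ring
    have h2 : a ^ (p - 2) * (y i ^ (-a - 1)) ^ (p - 2) * (-a * y i ^ (-a - 1))
        = -(a ^ (p - 2) * a) * (y i ^ (-a - 1)) ^ (p - 2 + 1) := by
      rw [Real.rpow_add_one ht.ne']; ring
    rw [h2, ← Real.rpow_add_one ha.ne']
    have : p - 2 + 1 = p - 1 := by ring
    rw [this, ← Real.rpow_mul hy.le]
  rw [hev.fderiv_eq]
  have hφ : HasFDerivAt (fun y : EuclideanSpace ℝ (Fin N) => -(a ^ (p - 1)) * y i ^ c)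
      ((-(a ^ (p - 1))) • ((c * x i ^ (c - 1)) •
        (EuclideanSpace.proj i : EuclideanSpace ℝ (Fin N) →L[ℝ] ℝ))) x :=
    (hasFDerivAt_rpow_proj i c x hx).const_mul _
  have hGd := hφ.smul_const (EuclideanSpace.single i (1:ℝ))
  rw [hGd.fderiv]
  have hsum : ∀ j : Fin N,
      ((((-(a ^ (p - 1))) • ((c * x i ^ (c - 1)) •
        (EuclideanSpace.proj i : EuclideanSpace ℝ (Fin N) →L[ℝ] ℝ))).smulRight
          (EuclideanSpace.single i (1:ℝ))) (EuclideanSpace.single j 1)) j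
      = (if j = i then (-(a ^ (p - 1))) * ((c * x i ^ (c - 1))) else 0) := by
    intro j
    by_cases h : j = i <;> simp [h, EuclideanSpace.single_apply]
  rw [Finset.sum_congr rfl fun j _ => hsum j, Finset.sum_ite_eq' Finset.univ i, if_pos (Finset.mem_univ i), hc]
  ring

theorem stmt16 (N : ℕ) (hN : 0 < N) (p₁ p₂ q₁ q₂ a b : ℝ)
    (hp₁ : 1 < p₁) (hp₂ : 1 < p₂) (hq₁ : p₁ - 1 < q₁) (hq₂ : p₂ - 1 < q₂)
    (ha : a = (p₂ * q₂ + p₁ * (p₂ - 1)) / (q₁ * q₂ - (p₁ - 1) * (p₂ - 1)))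
    (hb : b = (p₁ * q₁ + p₂ * (p₁ - 1)) / (q₁ * q₂ - (p₁ - 1) * (p₂ - 1))) :
    ∃ lam > (0:ℝ), ∃ mu > (0:ℝ),
      ∀ x : EuclideanSpace ℝ (Fin N), 0 < x ⟨0, hN⟩ →
        (∑ i : Fin N,
          (fderiv ℝ (fun y : EuclideanSpace ℝ (Fin N) =>
              (‖gradient (fun z : EuclideanSpace ℝ (Fin N) => z ⟨0, hN⟩ ^ (-a)) y‖ ^ (p₁ - 2)) •
                gradient (fun z : EuclideanSpace ℝ (Fin N) => z ⟨0, hN⟩ ^ (-a)) y)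
            x (EuclideanSpace.single i 1)) i)
          = lam * (x ⟨0, hN⟩ ^ (-b)) ^ q₂ ∧
        (∑ i : Fin N,
          (fderiv ℝ (fun y : EuclideanSpace ℝ (Fin N) =>
              (‖gradient (fun z : EuclideanSpace ℝ (Fin N) => z ⟨0, hN⟩ ^ (-b)) y‖ ^ (p₂ - 2)) •
                gradient (fun z : EuclideanSpace ℝ (Fin N) => z ⟨0, hN⟩ ^ (-b)) y)
            x (EuclideanSpace.single i 1)) i)
          = mu * (x ⟨0, hN⟩ ^ (-a)) ^ q₁ := by
  have hD : (0:ℝ) < q₁ * q₂ - (p₁ - 1) * (p₂ - 1) := by nlinarith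
  have ha' : 0 < a := by rw [ha]; apply div_pos; nlinarith; exact hD
  have hb' : 0 < b := by rw [hb]; apply div_pos; nlinarith; exact hD
  have hDi : (q₁ * q₂ - (p₁ - 1) * (p₂ - 1)) * (q₁ * q₂ - (p₁ - 1) * (p₂ - 1))⁻¹ = 1 :=
    mul_inv_cancel₀ hD.ne'
  have e1 : (-a - 1) * (p₁ - 1) - 1 = -b * q₂ := by
    rw [ha, hb, div_eq_mul_inv, div_eq_mul_inv]; linear_combination p₁ * hDi
  have e2 : (-b - 1) * (p₂ - 1) - 1 = -a * q₁ := by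
    rw [ha, hb, div_eq_mul_inv, div_eq_mul_inv]; linear_combination p₂ * hDi
  refine ⟨a ^ (p₁ - 1) * ((a + 1) * (p₁ - 1)),
    mul_pos (Real.rpow_pos_of_pos ha' _) (mul_pos (by linarith) (by linarith)),
    b ^ (p₂ - 1) * ((b + 1) * (p₂ - 1)),
    mul_pos (Real.rpow_pos_of_pos hb' _) (mul_pos (by linarith) (by linarith)),
    fun x hx => ?_⟩
  constructor
  · rw [key_sum ⟨0, hN⟩ p₁ a hp₁ ha' x hx, e1, Real.rpow_mul hx.le]
  · rw [key_sum ⟨0, hN⟩ p₂ b hp₂ hb' x hx, e2, Real.rpow_mul hx.le]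
end
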